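/- Let ρ1 ∈ D_{n1} and ρ2 ∈ D_{n2} be density matrices and let ρ ∈ S(ρ1,ρ2). Then rank(ρ1) ≤ rank(ρ)·rank(ρ2), rank(ρ2) ≤ rank(ρ)·rank(ρ1), and rank(ρ) ≤ rank(ρ1)·rank(ρ2). -/

import Mathlib

open Matrix Finset
open scoped ComplexOrder

section Helpers

variable {n m : Type*} [Fintype n] [DecidableEq n] [Fintype m] [DecidableEq m]

lemma herm_dot_swap {A : Matrix n n ℂ} (hA : A.IsHermitian) (v y : n → ℂ) :
    star v ⬝ᵥ (A *ᵥ y) = star (A *ᵥ v) ⬝ᵥ y := by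
  rw [star_mulVec, hA.eq, dotProduct_mulVec]

/-- For a Hermitian matrix, every vector decomposes as range + kernel. -/
lemma herm_decomp {A : Matrix n n ℂ} (hA : A.IsHermitian) (x : n → ℂ) :
    ∃ u v, x = A *ᵥ u + v ∧ A *ᵥ v = 0 := by
  set Rg := LinearMap.range A.mulVecLin
  set K := LinearMap.ker A.mulVecLin
  have hinf : Rg ⊓ K = ⊥ := by
    rw [Submodule.eq_bot_iff]
    rintro y ⟨⟨u, rfl⟩, hy2⟩
    have hy2' : A *ᵥ (A *ᵥ u) = 0 := hy2
    apply dotProduct_star_self_eq_zero.mp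
    have : star (A *ᵥ u) ⬝ᵥ (A.mulVecLin u) = star u ⬝ᵥ (A *ᵥ (A *ᵥ u)) := by
      simpa only [mulVecLin_apply] using (herm_dot_swap hA u (A *ᵥ u)).symm
    rw [mulVecLin_apply] at this ⊢
    rw [this, hy2', dotProduct_zero]
  have hsum : Rg ⊔ K = ⊤ := by
    apply Submodule.eq_top_of_finrank_eq
    have h1 := Submodule.finrank_sup_add_finrank_inf_eq Rg K
    rw [hinf, finrank_bot, add_zero] at h1
    rw [h1, LinearMap.finrank_range_add_finrank_ker]
  have hx : x ∈ Rg ⊔ K := by rw [hsum]; trivial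
  obtain ⟨y, hy, z, hz, rfl⟩ := Submodule.mem_sup.mp hx
  obtain ⟨u, rfl⟩ := hy
  exact ⟨u, z, rfl, hz⟩

/-- PSD: range P ≤ range (P + Q). -/
lemma psd_range_le_add {P Q : Matrix n n ℂ} (hP : P.PosSemidef) (hQ : Q.PosSemidef) :
    LinearMap.range P.mulVecLin ≤ LinearMap.range (P + Q).mulVecLin := by
  rintro x ⟨y, rfl⟩
  have hPQ : (P + Q).PosSemidef := hP.add hQ
  obtain ⟨u, v, hdecomp, hker⟩ := herm_decomp hPQ.isHermitian (P.mulVecLin y)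
  have hv0 : v = 0 := by
    have hkerP : P *ᵥ v = 0 := by
      have h0 : star v ⬝ᵥ (P *ᵥ v) + star v ⬝ᵥ (Q *ᵥ v) = 0 := by
        rw [← dotProduct_add, ← add_mulVec, hker, dotProduct_zero]
      have h1 := hP.dotProduct_mulVec_nonneg v
      have h2 := hQ.dotProduct_mulVec_nonneg v
      have := (add_eq_zero_iff_of_nonneg h1 h2).mp h0
      exact (hP.dotProduct_mulVec_zero_iff v).mp this.1
    apply dotProduct_star_self_eq_zero.mp
    have e1 : star v ⬝ᵥ (P.mulVecLin y) = 0 := by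
      rw [mulVecLin_apply, herm_dot_swap hP.isHermitian, hkerP]
      simp
    have e2 : star v ⬝ᵥ ((P + Q) *ᵥ u) = 0 := by
      rw [herm_dot_swap hPQ.isHermitian, hker]
      simp
    calc star v ⬝ᵥ v = star v ⬝ᵥ ((P + Q) *ᵥ u + v) - star v ⬝ᵥ ((P + Q) *ᵥ u) := by
          rw [dotProduct_add]; ring
      _ = 0 := by rw [← hdecomp, e1, e2, zero_sub, neg_zero]
  refine ⟨u, ?_⟩
  rw [mulVecLin_apply] at hdecomp
  simp only [mulVecLin_apply]
  rw [hdecomp, hv0, add_zero]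

/-- PSD family: range of one term ≤ range of the sum. -/
lemma psd_range_le_sum {ι : Type*} [Fintype ι] {B : ι → Matrix n n ℂ}
    (hB : ∀ j, (B j).PosSemidef) (k : ι) :
    LinearMap.range (B k).mulVecLin ≤ LinearMap.range (∑ j, B j).mulVecLin := by
  classical
  have : ∑ j, B j = B k + ∑ j ∈ univ.erase k, B j := by
    rw [← Finset.add_sum_erase _ _ (mem_univ k)]
  rw [this]
  exact psd_range_le_add (hB k) (Finset.sum_induction _ _ (fun a b ha hb => ha.add hb)
    Matrix.PosSemidef.zero (fun j _ => hB j))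

lemma range_self_mul_conjTranspose' (C : Matrix n m ℂ) :
    LinearMap.range (C * Cᴴ).mulVecLin = LinearMap.range C.mulVecLin := by
  apply Submodule.eq_of_le_of_finrank_le
  · rw [mulVecLin_mul]
    exact LinearMap.range_comp_le_range _ _
  · exact le_of_eq (Matrix.rank_self_mul_conjTranspose C).symm

lemma rank_add_le' (A B : Matrix n m ℂ) : (A + B).rank ≤ A.rank + B.rank := by
  have hrange : LinearMap.range (A + B).mulVecLin ≤
      LinearMap.range A.mulVecLin ⊔ LinearMap.range B.mulVecLin := by
    rintro x ⟨y, rfl⟩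
    exact Submodule.mem_sup.mpr ⟨A.mulVecLin y, ⟨y, rfl⟩, B.mulVecLin y, ⟨y, rfl⟩, by
      simp [add_mulVec]⟩
  calc (A + B).rank ≤ Module.finrank ℂ
        ↥(LinearMap.range A.mulVecLin ⊔ LinearMap.range B.mulVecLin) :=
        Submodule.finrank_mono hrange
    _ ≤ A.rank + B.rank :=
        Submodule.finrank_add_le_finrank_add_finrank _ _

lemma rank_sum_le' {ι : Type*} (s : Finset ι) (A : ι → Matrix n m ℂ) :
    (∑ j ∈ s, A j).rank ≤ ∑ j ∈ s, (A j).rank := by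
  classical
  induction s using Finset.induction with
  | empty => simp [Matrix.rank_zero]
  | insert _ _ h ih =>
    rw [Finset.sum_insert h, Finset.sum_insert h]
    exact le_trans (rank_add_le' _ _) (by omega)

/-- Entrywise spectral decomposition of a PSD matrix into a sum of outer products. -/
lemma psd_entry_decomp {A : Matrix n n ℂ} (hA : A.PosSemidef) :
    ∃ w : n → n → ℂ,
      (∀ a b, A a b = ∑ k, w k a * (starRingEnd ℂ) (w k b)) ∧
      (∀ k, hA.isHermitian.eigenvalues k = 0 → w k = 0) := by
  refine ⟨fun k a => (Real.sqrt (hA.isHermitian.eigenvalues k) : ℂ) *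
      (hA.isHermitian.eigenvectorUnitary : Matrix n n ℂ) a k, fun a b => ?_, fun k hk => ?_⟩
  · conv_lhs => rw [hA.isHermitian.spectral_theorem, Unitary.conjStarAlgAut_apply]
    simp only [Matrix.mul_apply, Matrix.diagonal_apply, Function.comp_apply, mul_ite, mul_zero,
      Finset.sum_ite_eq', Finset.mem_univ, if_true, Matrix.star_apply]
    refine Finset.sum_congr rfl fun k _ => ?_
    rw [_root_.map_mul, Complex.conj_ofReal, ← Complex.star_def]
    rw [show ((Real.sqrt (hA.isHermitian.eigenvalues k) : ℝ) : ℂ) *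
          (hA.isHermitian.eigenvectorUnitary : Matrix n n ℂ) a k *
          (((Real.sqrt (hA.isHermitian.eigenvalues k) : ℝ) : ℂ) *
            star ((hA.isHermitian.eigenvectorUnitary : Matrix n n ℂ) b k)) =
        (((Real.sqrt (hA.isHermitian.eigenvalues k) : ℝ) : ℂ) *
          ((Real.sqrt (hA.isHermitian.eigenvalues k) : ℝ) : ℂ)) *
          ((hA.isHermitian.eigenvectorUnitary : Matrix n n ℂ) a k *
            star ((hA.isHermitian.eigenvectorUnitary : Matrix n n ℂ) b k)) from by ring]
    rw [← Complex.ofReal_mul, Real.mul_self_sqrt (hA.eigenvalues_nonneg k)]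
    rw [mul_assoc]
    exact mul_left_comm _ _ _
  · funext a; simp [hk]

/-- A function on a product type whose "columns" lie in `V1` and "rows" lie in `V2`
belongs to the span of products of basis vectors. -/
lemma mem_outer_span (V1 : Submodule ℂ (m → ℂ)) (V2 : Submodule ℂ (n → ℂ))
    {ι1 ι2 : Type*} [Fintype ι1] [Fintype ι2] (b1 : Module.Basis ι1 ℂ V1) (b2 : Module.Basis ι2 ℂ V2)
    (v : m × n → ℂ) (hcol : ∀ l, (fun i => v (i, l)) ∈ V1)
    (hrow : ∀ i, (fun l => v (i, l)) ∈ V2) :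
    v ∈ Submodule.span ℂ (Set.range fun st : ι1 × ι2 =>
      fun p : m × n => (b1 st.1 : m → ℂ) p.1 * (b2 st.2 : n → ℂ) p.2) := by
  classical
  set H : ι1 → n → ℂ := fun s l => b1.repr ⟨fun i => v (i, l), hcol l⟩ s with hH
  have hexp1 : ∀ i l, v (i, l) = ∑ s, H s l * (b1 s : m → ℂ) i := by
    intro i l
    have h0 : (fun i => v (i, l)) =
        ↑(∑ s, b1.repr ⟨fun i => v (i, l), hcol l⟩ s • b1 s) :=
      (congrArg Subtype.val (b1.sum_repr ⟨fun i => v (i, l), hcol l⟩)).symm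
    calc v (i, l) = (↑(∑ s, b1.repr ⟨fun i => v (i, l), hcol l⟩ s • b1 s) : m → ℂ) i :=
          congrFun h0 i
      _ = ∑ s, H s l * (b1 s : m → ℂ) i := by
          rw [AddSubmonoidClass.coe_finset_sum]
          simp [Finset.sum_apply, H, mul_comm]
  have hHmem : ∀ s, H s ∈ V2 := by
    intro s
    obtain ⟨ψ, hψ⟩ := LinearMap.exists_extend (b1.coord s)
    have hψ' : ∀ x (hx : x ∈ V1), ψ x = b1.repr ⟨x, hx⟩ s := by
      intro x hx
      have := congrFun (congrArg DFunLike.coe hψ) ⟨x, hx⟩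
      simpa [Module.Basis.coord_apply] using this
    have hHs : H s = ∑ i, ψ (Pi.single i 1) • (fun l => v (i, l)) := by
      funext l
      have hx : (fun i => v (i, l)) = ∑ i, v (i, l) • (Pi.single i 1 : m → ℂ) := by
        funext j
        simp [Finset.sum_apply, Pi.single_apply, eq_comm]
      calc H s l = ψ (fun i => v (i, l)) := (hψ' _ _).symm
        _ = ∑ i, v (i, l) * ψ (Pi.single i 1) := by
            rw [hx, map_sum]
            exact Finset.sum_congr rfl fun i _ => by rw [_root_.map_smul, smul_eq_mul]
        _ = (∑ i, ψ (Pi.single i 1) • (fun l => v (i, l))) l := by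
            simp [Finset.sum_apply, smul_eq_mul, mul_comm]
    rw [hHs]
    exact Submodule.sum_mem _ fun i _ => Submodule.smul_mem _ _ (hrow i)
  set G : ι1 → ι2 → ℂ := fun s t => b2.repr ⟨H s, hHmem s⟩ t with hG
  have hexp2 : ∀ s l, H s l = ∑ t, G s t * (b2 t : n → ℂ) l := by
    intro s l
    have h0 : H s = ↑(∑ t, b2.repr ⟨H s, hHmem s⟩ t • b2 t) :=
      (congrArg Subtype.val (b2.sum_repr ⟨H s, hHmem s⟩)).symm
    calc H s l = (↑(∑ t, b2.repr ⟨H s, hHmem s⟩ t • b2 t) : n → ℂ) l := congrFun h0 l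
      _ = ∑ t, G s t * (b2 t : n → ℂ) l := by
          rw [AddSubmonoidClass.coe_finset_sum]
          simp [Finset.sum_apply, G, mul_comm]
  have hv : v = ∑ st : ι1 × ι2, (G st.1 st.2) •
      (fun p : m × n => (b1 st.1 : m → ℂ) p.1 * (b2 st.2 : n → ℂ) p.2) := by
    funext p
    rw [Fintype.sum_prod_type]
    simp only [Finset.sum_apply, Pi.smul_apply, smul_eq_mul]
    calc v p = v (p.1, p.2) := rfl
      _ = ∑ s, H s p.2 * (b1 s : m → ℂ) p.1 := hexp1 p.1 p.2
      _ = ∑ s, ∑ t, G s t * ((b1 s : m → ℂ) p.1 * (b2 t : n → ℂ) p.2) := by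
          refine Finset.sum_congr rfl fun s _ => ?_
          rw [hexp2, Finset.sum_mul]
          exact Finset.sum_congr rfl fun t _ => by ring
  rw [hv]
  exact Submodule.sum_mem _ fun st _ => Submodule.smul_mem _ _ (Submodule.subset_span ⟨st, rfl⟩)

end Helpers

/-- Partial trace over the first subsystem: `tr_1(ρ) = Σ_j ρ_{jj} ∈ M_{n2}`. -/
noncomputable def trace1 {n1 n2 : ℕ} (ρ : Matrix (Fin n1 × Fin n2) (Fin n1 × Fin n2) ℂ) :
    Matrix (Fin n2) (Fin n2) ℂ :=
  Matrix.of fun i j => ∑ k : Fin n1, ρ (k, i) (k, j)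

/-- Partial trace over the second subsystem: `tr_2(ρ) = (tr ρ_{ij})_{ij} ∈ M_{n1}`. -/
noncomputable def trace2 {n1 n2 : ℕ} (ρ : Matrix (Fin n1 × Fin n2) (Fin n1 × Fin n2) ℂ) :
    Matrix (Fin n1) (Fin n1) ℂ :=
  Matrix.of fun i j => ∑ k : Fin n2, ρ (i, k) (j, k)

/-- Rank inequalities between a global state and its marginals. -/
theorem stmt16 {n1 n2 : ℕ}
    (ρ1 : Matrix (Fin n1) (Fin n1) ℂ) (ρ2 : Matrix (Fin n2) (Fin n2) ℂ)
    (hρ1 : ρ1.PosSemidef) (hρ1tr : ρ1.trace = 1)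
    (hρ2 : ρ2.PosSemidef) (hρ2tr : ρ2.trace = 1)
    (ρ : Matrix (Fin n1 × Fin n2) (Fin n1 × Fin n2) ℂ)
    (hρ : ρ.PosSemidef) (hρtr : ρ.trace = 1)
    (h1 : trace2 ρ = ρ1) (h2 : trace1 ρ = ρ2) :
    ρ1.rank ≤ ρ.rank * ρ2.rank ∧ ρ2.rank ≤ ρ.rank * ρ1.rank ∧
      ρ.rank ≤ ρ1.rank * ρ2.rank := by
  classical
  obtain ⟨w, hw, hw0⟩ := psd_entry_decomp hρ
  set M : (Fin n1 × Fin n2) → Matrix (Fin n1) (Fin n2) ℂ :=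
    fun k => Matrix.of (fun i l => w k (i, l)) with hMdef
  -- decompositions of the marginals
  have hde1 : ρ1 = ∑ k, M k * (M k)ᴴ := by
    rw [← h1]
    ext i i'
    simp only [trace2, Matrix.of_apply, Matrix.sum_apply, Matrix.mul_apply,
      conjTranspose_apply]
    rw [Finset.sum_congr rfl fun l (_ : l ∈ univ) => hw (i, l) (i', l), Finset.sum_comm]
    exact Finset.sum_congr rfl fun k _ => Finset.sum_congr rfl fun l _ => by
      simp [M, Complex.star_def]
  have hde2 : ρ2 = ∑ k, (M k)ᵀ * ((M k)ᵀ)ᴴ := by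
    rw [← h2]
    ext l l'
    simp only [trace1, Matrix.of_apply, Matrix.sum_apply, Matrix.mul_apply,
      conjTranspose_apply, transpose_apply]
    rw [Finset.sum_congr rfl fun i (_ : i ∈ univ) => hw (i, l) (i, l'), Finset.sum_comm]
    exact Finset.sum_congr rfl fun k _ => Finset.sum_congr rfl fun i _ => by
      simp [M, Complex.star_def]
  -- range inclusions
  have hr1 : ∀ k, LinearMap.range (M k).mulVecLin ≤ LinearMap.range ρ1.mulVecLin := by
    intro k
    rw [hde1, ← range_self_mul_conjTranspose' (M k)]
    exact psd_range_le_sum (B := fun j => M j * (M j)ᴴ)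
      (fun j => posSemidef_self_mul_conjTranspose _) k
  have hr2 : ∀ k, LinearMap.range (M k)ᵀ.mulVecLin ≤ LinearMap.range ρ2.mulVecLin := by
    intro k
    rw [hde2, ← range_self_mul_conjTranspose' (M k)ᵀ]
    exact psd_range_le_sum (B := fun j => (M j)ᵀ * ((M j)ᵀ)ᴴ)
      (fun j => posSemidef_self_mul_conjTranspose _) k
  have hrank1 : ∀ k, (M k).rank ≤ ρ1.rank := fun k => Submodule.finrank_mono (hr1 k)
  have hrank2 : ∀ k, (M k).rank ≤ ρ2.rank := by
    intro k
    rw [← Matrix.rank_transpose]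
    exact Submodule.finrank_mono (hr2 k)
  -- the support
  set sup : Finset (Fin n1 × Fin n2) :=
    univ.filter (fun k => hρ.isHermitian.eigenvalues k ≠ 0) with hsup
  have hcard : sup.card = ρ.rank := by
    rw [hρ.isHermitian.rank_eq_card_non_zero_eigs, Fintype.card_subtype]
  have hM0 : ∀ k ∉ sup, M k = 0 := by
    intro k hk
    have : hρ.isHermitian.eigenvalues k = 0 := by
      by_contra h
      exact hk (Finset.mem_filter.mpr ⟨mem_univ k, h⟩)
    ext i l
    simp [M, hw0 k this]
  have hde1' : ρ1 = ∑ k ∈ sup, M k * (M k)ᴴ := by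
    rw [hde1]
    symm
    apply Finset.sum_subset (Finset.subset_univ sup)
    intro k _ hk
    rw [hM0 k hk]
    simp
  have hde2' : ρ2 = ∑ k ∈ sup, (M k)ᵀ * ((M k)ᵀ)ᴴ := by
    rw [hde2]
    symm
    apply Finset.sum_subset (Finset.subset_univ sup)
    intro k _ hk
    rw [hM0 k hk]
    simp
  refine ⟨?_, ?_, ?_⟩
  · calc ρ1.rank = (∑ k ∈ sup, M k * (M k)ᴴ).rank := by rw [← hde1']
      _ ≤ ∑ k ∈ sup, (M k * (M k)ᴴ).rank := rank_sum_le' _ _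
      _ = ∑ k ∈ sup, (M k).rank :=
          Finset.sum_congr rfl fun k _ => Matrix.rank_self_mul_conjTranspose _
      _ ≤ ∑ _k ∈ sup, ρ2.rank := Finset.sum_le_sum fun k _ => hrank2 k
      _ = ρ.rank * ρ2.rank := by rw [Finset.sum_const, smul_eq_mul, hcard]
  · calc ρ2.rank = (∑ k ∈ sup, (M k)ᵀ * ((M k)ᵀ)ᴴ).rank := by rw [← hde2']
      _ ≤ ∑ k ∈ sup, ((M k)ᵀ * ((M k)ᵀ)ᴴ).rank := rank_sum_le' _ _
      _ = ∑ k ∈ sup, (M k)ᵀ.rank :=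
          Finset.sum_congr rfl fun k _ => Matrix.rank_self_mul_conjTranspose _
      _ ≤ ∑ _k ∈ sup, ρ1.rank := Finset.sum_le_sum fun k _ => by
          rw [Matrix.rank_transpose]; exact hrank1 k
      _ = ρ.rank * ρ1.rank := by rw [Finset.sum_const, smul_eq_mul, hcard]
  · -- third inequality
    set V1 := LinearMap.range ρ1.mulVecLin with hV1
    set V2 := LinearMap.range ρ2.mulVecLin with hV2
    let b1 : Module.Basis (Fin (Module.finrank ℂ V1)) ℂ V1 := Module.finBasis ℂ V1
    let b2 : Module.Basis (Fin (Module.finrank ℂ V2)) ℂ V2 := Module.finBasis ℂ V2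
    set f : (Fin (Module.finrank ℂ V1)) × (Fin (Module.finrank ℂ V2)) →
        ((Fin n1 × Fin n2) → ℂ) := fun st =>
      fun p => (b1 st.1 : Fin n1 → ℂ) p.1 * (b2 st.2 : Fin n2 → ℂ) p.2 with hf
    have hmemW : ∀ k, w k ∈ Submodule.span ℂ (Set.range f) := by
      intro k
      have hcol : ∀ l, (fun i => w k (i, l)) ∈ V1 := by
        intro l
        apply hr1 k
        refine ⟨Pi.single l 1, ?_⟩
        funext i
        simp [mulVecLin_apply, Matrix.mulVec_single, M]
      have hrow : ∀ i, (fun l => w k (i, l)) ∈ V2 := by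
        intro i
        apply hr2 k
        refine ⟨Pi.single i 1, ?_⟩
        funext l
        simp [mulVecLin_apply, Matrix.mulVec_single, M]
      have := mem_outer_span V1 V2 b1 b2 (fun p => w k (p.1, p.2)) hcol hrow
      simpa using this
    have hρrange : LinearMap.range ρ.mulVecLin ≤ Submodule.span ℂ (Set.range f) := by
      rintro x ⟨y, rfl⟩
      have hxy : ρ.mulVecLin y = ∑ k, (∑ b, (starRingEnd ℂ) (w k b) * y b) • w k := by
        funext a
        simp only [mulVecLin_apply, Matrix.mulVec, dotProduct, Finset.sum_apply,
          Pi.smul_apply, smul_eq_mul]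
        rw [Finset.sum_congr rfl fun b (_ : b ∈ univ) => by rw [hw a b]]
        rw [Finset.sum_congr rfl fun b (_ : b ∈ univ) => (Finset.sum_mul _ _ _ : _ = _)]
        rw [Finset.sum_comm]
        refine Finset.sum_congr rfl fun k _ => ?_
        rw [Finset.sum_mul]
        exact Finset.sum_congr rfl fun b _ => by ring
      rw [hxy]
      exact Submodule.sum_mem _ fun k _ => Submodule.smul_mem _ _ (hmemW k)
    have hWle : Module.finrank ℂ (Submodule.span ℂ (Set.range f)) ≤
        ρ1.rank * ρ2.rank := by
      have hle := LinearMap.finrank_range_le (Fintype.linearCombination ℂ f)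
      rw [Fintype.range_linearCombination] at hle
      rw [Module.finrank_fintype_fun_eq_card, Fintype.card_prod, Fintype.card_fin,
        Fintype.card_fin] at hle
      exact hle
    exact le_trans (Submodule.finrank_mono hρrange) hWle
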